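/- If j ∈ {3,...,n+1} is the label of the BoT leaf erased from a labeled binary tree of size n producing a labeled tree t' of size n−1, then there are exactly 4 positions in t' (relabeled increasingly by {1,...,n+1}\{j}) at which grafting a new leaf with label j recovers a tree whose best-of-three erasure is t' with BoT leaf labeled j: namely, the left and right of each of the two leaves v, v' of smallest labels sitting above the last active vertex at which fewer than three labels in {1,...,j−1} lie above. -/

import Mathlib

/-- A plane binary tree whose non-root leaves carry natural-number labels.
The root leaf (always labeled 0) is left implicit: an `LTree` is the part of
the tree above the unique edge incident to the root. -/
inductive LTree where
  | leaf : ℕ → LTree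
  | node : LTree → LTree → LTree
deriving DecidableEq

namespace LTree

/-- The size: number of branching (degree-3) nodes. -/
def size : LTree → ℕ
  | leaf _ => 0
  | node l r => size l + size r + 1

/-- The list of labels of the (non-root) leaves, left to right. -/
def labs : LTree → List ℕ
  | leaf a => [a]
  | node l r => labs l ++ labs r

/-- `t` is a labeled binary tree of size `n`: it has `n` branching nodes and its
`n+1` non-root leaves are bijectively labeled by `{1,…,n+1}` (the root leaf gets 0). -/
def IsLab (n : ℕ) (t : LTree) : Prop :=
  size t = n ∧ List.Perm (labs t) ((List.range (n + 1)).map (· + 1))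

/-- Number of elements of `L` strictly smaller than `x`. -/
def rank (L : List ℕ) (x : ℕ) : ℕ := L.countP (fun y => decide (y < x))

/-- Best-of-three comparison at a branching node with children `l`, `r`:
`true` iff at least two of the three minimally-labeled leaves of the fringe set
lie in the left child `l`. -/
def goLeft (l r : LTree) : Bool :=
  decide (2 ≤ (labs l).countP (fun x => decide (rank (labs l ++ labs r) x < 3)))

/-- The branching node selected by the best-of-three procedure (returned as the
fringe subtree rooted at it). -/
def botSel : LTree → LTree
  | leaf a => leaf a
  | node (leaf a) (leaf b) => node (leaf a) (leaf b)
  | node l r => if goLeft l r then botSel l else botSel r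

/-- The number of moves performed by the best-of-three selection. -/
def botDepth : LTree → ℕ
  | leaf _ => 0
  | node (leaf _) (leaf _) => 0
  | node l r => (if goLeft l r then botDepth l else botDepth r) + 1

/-- The position (sequence of left/right moves, `false` = left) of the selected node. -/
def botPos : LTree → List Bool
  | leaf _ => []
  | node (leaf _) (leaf _) => []
  | node l r => if goLeft l r then false :: botPos l else true :: botPos r

/-- Cut at the selected node: the two sibling leaves above it are removed, the
node becomes a leaf carrying the smaller label; returns the cut tree together
with the erased (BoT) label, i.e. the larger of the two. -/
def botCut : LTree → LTree × ℕ
  | leaf a => (leaf a, 0)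
  | node (leaf a) (leaf b) => (leaf (min a b), max a b)
  | node l r =>
    if goLeft l r then (node (botCut l).1 r, (botCut l).2)
    else (node l (botCut r).1, (botCut r).2)

/-- Relabel increasingly after erasing label `j`. -/
def relabel (j : ℕ) : LTree → LTree
  | leaf a => leaf (if a < j then a else a - 1)
  | node l r => node (relabel j l) (relabel j r)

/-- The label of the Best-of-Three leaf. -/
def botLabel (t : LTree) : ℕ := (botCut t).2

/-- Best-of-three erasure, including the increasing relabeling. -/
def botErase (t : LTree) : LTree := relabel (botCut t).2 (botCut t).1

/-- Positions (in the original coordinates of `t`) of the branching nodes cut by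
`k` successive best-of-three erasures, in order of erasure. -/
def eraseList : ℕ → LTree → List (List Bool)
  | 0, _ => []
  | k + 1, t => botPos t :: eraseList k (botErase t)

/-- The fringe subtree at a position (`false` = left child, `true` = right child). -/
def subAt : LTree → List Bool → Option LTree
  | t, [] => some t
  | leaf _, _ :: _ => none
  | node l _, false :: p => subAt l p
  | node _ r, true :: p => subAt r p

/-- Shift labels `≥ j` up by one, freeing the label `j`. -/
def relabelUp (j : ℕ) : LTree → LTree
  | leaf a => leaf (if a < j then a else a + 1)
  | node l r => node (relabelUp j l) (relabelUp j r)

/-- Graft a new leaf labeled `j` to the left (`side = false`) or right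
(`side = true`) of the leaf labeled `w`. -/
def graft (w j : ℕ) (side : Bool) : LTree → LTree
  | leaf a =>
    if a = w then (if side then node (leaf a) (leaf j) else node (leaf j) (leaf a))
    else leaf a
  | node l r => node (graft w j side l) (graft w j side r)

/-- The binary tree obtained from the `ℓ`-span (the unary–binary subtree spanned by
the root and the leaves labeled `1,…,ℓ`) by contracting its degree-2 vertices. -/
def trim (ℓ : ℕ) : LTree → LTree
  | leaf a => leaf a
  | node l r =>
    if (labs l).all (fun x => decide (ℓ < x)) then trim ℓ r
    else if (labs r).all (fun x => decide (ℓ < x)) then trim ℓ l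
    else node (trim ℓ l) (trim ℓ r)

/-- Map a position in `trim ℓ t` back to the corresponding position in `t`. -/
def trimPos (ℓ : ℕ) : LTree → List Bool → List Bool
  | leaf _, p => p
  | node l r, p =>
    if (labs l).all (fun x => decide (ℓ < x)) then true :: trimPos ℓ r p
    else if (labs r).all (fun x => decide (ℓ < x)) then false :: trimPos ℓ l p
    else
      match p with
      | [] => []
      | true :: q => true :: trimPos ℓ r q
      | false :: q => false :: trimPos ℓ l q

end LTree

namespace LTree
open List

lemma graft_not_mem {w j : ℕ} {s : Bool} : ∀ {t : LTree}, w ∉ labs t → graft w j s t = t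
  | leaf a, h => by
      simp [labs] at h
      simp [graft, Ne.symm h]
  | node l r, h => by
      simp [labs] at h
      simp [graft, graft_not_mem h.1, graft_not_mem h.2]

lemma graft_isNode {w j : ℕ} {s : Bool} : ∀ {t : LTree}, w ∈ labs t →
    ∃ x y, graft w j s t = node x y
  | leaf a, h => by
      simp [labs] at h
      subst h
      cases s
      · exact ⟨leaf j, leaf w, by simp [graft]⟩
      · exact ⟨leaf w, leaf j, by simp [graft]⟩
  | node l r, _ => ⟨_, _, rfl⟩

lemma labs_graft {w j : ℕ} {s : Bool} : ∀ {t : LTree}, w ∈ labs t → (labs t).Nodup →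
    (labs (graft w j s t)).Perm (j :: labs t)
  | leaf a, h, _ => by
      simp [labs] at h
      subst h
      cases s <;> simp [graft, labs]
      exact List.Perm.swap _ _ _
  | node l r, h, hnd => by
      simp only [labs, mem_append] at h
      have hnd' := hnd
      simp only [labs] at hnd'
      rcases h with h | h
      · have hwr : w ∉ labs r := fun hr => (List.disjoint_of_nodup_append hnd') h hr
        simp only [graft, labs, graft_not_mem hwr]
        calc labs (graft w j s l) ++ labs r
            ~ (j :: labs l) ++ labs r := (labs_graft h (List.Nodup.of_append_left hnd')).append_right _
          _ = j :: (labs l ++ labs r) := rfl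
      · have hwl : w ∉ labs l := fun hl => (List.disjoint_of_nodup_append hnd') hl h
        simp only [graft, labs, graft_not_mem hwl]
        calc labs l ++ labs (graft w j s r)
            ~ labs l ++ (j :: labs r) := (labs_graft h (List.Nodup.of_append_right hnd')).append_left _
          _ ~ j :: (labs l ++ labs r) := List.perm_middle

lemma botCut_nl (x y r : LTree) : botCut (node (node x y) r) =
    if goLeft (node x y) r then (node (botCut (node x y)).1 r, (botCut (node x y)).2)
    else (node (node x y) (botCut r).1, (botCut r).2) := rfl

lemma botCut_nr (l x y : LTree) : botCut (node l (node x y)) =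
    if goLeft l (node x y) then (node (botCut l).1 (node x y), (botCut l).2)
    else (node l (botCut (node x y)).1, (botCut (node x y)).2) := by
  cases l <;> rfl

lemma botCut_snd : ∀ t : LTree, (botCut t).2 = 0 ∨ (botCut t).2 ∈ labs t
  | leaf _ => Or.inl rfl
  | node (leaf a) (leaf b) => by
      rcases max_choice a b with h | h <;> simp [botCut, labs, h]
  | node (node x y) r => by
      rw [botCut_nl]
      split
      · rcases botCut_snd (node x y) with h | h
        · exact Or.inl h
        · exact Or.inr (by simp only [labs, mem_append] at h ⊢; tauto)
      · rcases botCut_snd r with h | h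
        · exact Or.inl h
        · exact Or.inr (by simp [labs, h])
  | node (leaf a) (node x y) => by
      rw [botCut_nr]
      split
      · rcases botCut_snd (leaf a) with h | h
        · exact Or.inl h
        · exact Or.inr (by simp [labs] at h ⊢; exact Or.inl h)
      · rcases botCut_snd (node x y) with h | h
        · exact Or.inl h
        · exact Or.inr (by simp only [labs, mem_append] at h ⊢; tauto)

end LTree

namespace LTree
open List

lemma countP_or_le (p q : ℕ → Bool) (l : List ℕ) :
    countP (fun x => p x || q x) l ≤ countP p l + countP q l := by
  induction l with
  | nil => simp
  | cons a l ih =>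
      simp only [countP_cons]
      cases hp : p a <;> cases hq : q a <;> simp [hp, hq] <;> omega

lemma rank_perm {L L' : List ℕ} (h : L.Perm L') (x : ℕ) : rank L x = rank L' x :=
  h.countP_eq _

lemma rank_cons_self (S : List ℕ) (j : ℕ) :
    rank (j :: S) j = countP (fun y => decide (y < j)) S := by
  simp [rank, countP_cons]

lemma rank_le_of_lt {S : List ℕ} {j x : ℕ} (hx : x < j) :
    rank (j :: S) x ≤ countP (fun y => decide (y < j)) S := by
  have h1 : rank (j :: S) x = countP (fun y => decide (y < x)) S := by
    simp [rank, countP_cons, Nat.not_lt.mpr hx.le]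
  rw [h1]
  exact countP_mono_left (fun y _ hy => by
    simp only [decide_eq_true_eq] at *; omega)

lemma rank_gt {S : List ℕ} {j x : ℕ} (hx : j < x) :
    countP (fun y => decide (y < j)) S + 1 ≤ rank (j :: S) x := by
  have h1 : rank (j :: S) x = countP (fun y => decide (y < x)) S + 1 := by
    simp [rank, countP_cons, hx]
  rw [h1]
  have := countP_mono_left (l := S) (p := fun y => decide (y < j))
    (q := fun y => decide (y < x)) (fun y _ hy => by
      simp only [decide_eq_true_eq] at *; omega)
  omega

/-- If a nodup list has at least three elements below `j`, at least three of its
elements have rank `< 3` in `j :: S`. -/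
lemma three_le_rank_count {S : List ℕ} {j : ℕ} (hnd : (j :: S).Nodup)
    (hc : 3 ≤ countP (fun y => decide (y < j)) S) :
    3 ≤ countP (fun x => decide (rank (j :: S) x < 3)) S := by
  have hS : S.Nodup := (nodup_cons.mp hnd).2
  have hjS : j ∉ S := (nodup_cons.mp hnd).1
  set F := (S.filter (fun x => decide (x < j))).toFinset with hF
  have hmemF : ∀ x, x ∈ F ↔ x ∈ S ∧ x < j := by
    intro x
    simp [hF, List.mem_toFinset, List.mem_filter]
  have hcard : 3 ≤ F.card := by
    rw [hF, List.toFinset_card_of_nodup (hS.filter _), ← countP_eq_length_filter]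
    exact hc
  have h0 : F.Nonempty := Finset.card_pos.mp (by omega)
  set a := F.min' h0 with ha'
  have haF : a ∈ F := F.min'_mem h0
  set F1 := F.erase a with hF1
  have hcard1 : 2 ≤ F1.card := by
    rw [hF1, Finset.card_erase_of_mem haF]; omega
  have h1 : F1.Nonempty := Finset.card_pos.mp (by omega)
  set b := F1.min' h1 with hb'
  have hbF1 : b ∈ F1 := F1.min'_mem h1
  have hbF : b ∈ F := Finset.mem_of_mem_erase hbF1
  have hba : b ≠ a := Finset.ne_of_mem_erase hbF1
  set F2 := F1.erase b with hF2
  have hcard2 : 1 ≤ F2.card := by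
    rw [hF2, Finset.card_erase_of_mem hbF1]; omega
  have h2 : F2.Nonempty := Finset.card_pos.mp (by omega)
  set c := F2.min' h2 with hc'
  have hcF2 : c ∈ F2 := F2.min'_mem h2
  have hcF1 : c ∈ F1 := Finset.mem_of_mem_erase hcF2
  have hcb : c ≠ b := Finset.ne_of_mem_erase hcF2
  have hca : c ≠ a := Finset.ne_of_mem_erase hcF1
  have haS := (hmemF a).mp haF
  have hbS := (hmemF b).mp hbF
  have hcS := (hmemF c).mp ((hmemF c).mpr ⟨((hmemF c).mp (Finset.mem_of_mem_erase hcF1)).1,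
    ((hmemF c).mp (Finset.mem_of_mem_erase hcF1)).2⟩)
  -- rank bounds
  have hra : rank (j :: S) a = 0 := by
    rw [rank, countP_eq_zero]
    intro y hy
    simp only [decide_eq_true_eq, not_lt]
    rcases mem_cons.mp hy with rfl | hyS
    · exact haS.2.le
    · by_cases hyj : y < j
      · exact F.min'_le y ((hmemF y).mpr ⟨hyS, hyj⟩)
      · omega
  have hrb : rank (j :: S) b ≤ 1 := by
    have h1' : countP (fun y => decide (y < b)) (j :: S) ≤ countP (fun y => y == a) (j :: S) := by
      apply countP_mono_left
      intro y hy hyb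
      simp only [decide_eq_true_eq] at hyb
      simp only [beq_iff_eq]
      rcases mem_cons.mp hy with rfl | hyS
      · omega
      · have hyj : y < j := by omega
        by_contra hne
        have : y ∈ F1 := Finset.mem_erase.mpr ⟨hne, (hmemF y).mpr ⟨hyS, hyj⟩⟩
        have := F1.min'_le y this
        omega
    calc rank (j :: S) b ≤ countP (fun y => y == a) (j :: S) := h1'
      _ = count a (j :: S) := rfl
      _ ≤ 1 := nodup_iff_count_le_one.mp hnd a
  have hrc : rank (j :: S) c ≤ 2 := by
    have h1' : countP (fun y => decide (y < c)) (j :: S) ≤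
        countP (fun y => (y == a) || (y == b)) (j :: S) := by
      apply countP_mono_left
      intro y hy hyc
      simp only [decide_eq_true_eq] at hyc
      simp only [Bool.or_eq_true, beq_iff_eq]
      rcases mem_cons.mp hy with rfl | hyS
      · omega
      · have hyj : y < j := by omega
        by_contra hne
        push_neg at hne
        have hy1 : y ∈ F1 := Finset.mem_erase.mpr ⟨hne.1, (hmemF y).mpr ⟨hyS, hyj⟩⟩
        have hy2 : y ∈ F2 := Finset.mem_erase.mpr ⟨hne.2, hy1⟩
        have := F2.min'_le y hy2
        omega
    have h2' := countP_or_le (fun y => y == a) (fun y => y == b) (j :: S)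
    have hca' : count a (j :: S) ≤ 1 := nodup_iff_count_le_one.mp hnd a
    have hcb' : count b (j :: S) ≤ 1 := nodup_iff_count_le_one.mp hnd b
    have : countP (fun y => y == a) (j :: S) = count a (j :: S) := rfl
    have : countP (fun y => y == b) (j :: S) = count b (j :: S) := rfl
    calc rank (j :: S) c ≤ _ := h1'
      _ ≤ countP (fun y => y == a) (j :: S) + countP (fun y => y == b) (j :: S) := h2'
      _ ≤ 2 := by
          have e1 : countP (fun y => y == a) (j :: S) = count a (j :: S) := rfl
          have e2 : countP (fun y => y == b) (j :: S) = count b (j :: S) := rfl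
          omega
  -- assemble
  have hsub : [a, b, c] <+~ S := by
    apply List.Nodup.subperm
    · have : a ≠ b ∧ a ≠ c ∧ b ≠ c := ⟨fun h => hba h.symm, fun h => hca h.symm, fun h => hcb h.symm⟩
      simp [this.1, this.2.1, this.2.2]
    · intro x hx
      simp at hx
      rcases hx with rfl | rfl | rfl
      · exact haS.1
      · exact hbS.1
      · exact hcS.1
  have := hsub.countP_le (fun x => decide (rank (j :: S) x < 3))
  have heval : countP (fun x => decide (rank (j :: S) x < 3)) [a, b, c] = 3 := by
    simp only [countP_cons, countP_nil, hra]
    have e1 : rank (j :: S) b < 3 := by omega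
    have e2 : rank (j :: S) c < 3 := by omega
    simp [e1, e2]
  omega

end LTree

namespace LTree
open List

lemma goLeft_graft_left {j w : ℕ} {s : Bool} {l : LTree} (r : LTree)
    (hw : w ∈ labs l) (hnd : (labs l).Nodup) :
    goLeft (graft w j s l) r =
      decide (2 ≤ countP (fun x => decide (rank (j :: (labs l ++ labs r)) x < 3))
        (j :: labs l)) := by
  have hp : (labs (graft w j s l)).Perm (j :: labs l) := labs_graft hw hnd
  have hfull : (labs (graft w j s l) ++ labs r).Perm (j :: (labs l ++ labs r)) :=
    hp.append_right _
  unfold goLeft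
  congr 1
  rw [countP_congr (fun x _ => by rw [show rank (labs (graft w j s l) ++ labs r) x
      = rank (j :: (labs l ++ labs r)) x from rank_perm hfull x])]
  exact congrArg _ (hp.countP_eq _)

lemma goLeft_graft_right {j w : ℕ} {s : Bool} {r : LTree} (l : LTree)
    (hw : w ∈ labs r) (hnd : (labs r).Nodup) :
    goLeft l (graft w j s r) =
      decide (2 ≤ countP (fun x => decide (rank (j :: (labs l ++ labs r)) x < 3))
        (labs l)) := by
  have hp : (labs (graft w j s r)).Perm (j :: labs r) := labs_graft hw hnd
  have hfull : (labs l ++ labs (graft w j s r)).Perm (j :: (labs l ++ labs r)) :=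
    (hp.append_left (labs l)).trans List.perm_middle
  unfold goLeft
  congr 1
  rw [countP_congr (fun x _ => by rw [show rank (labs l ++ labs (graft w j s r)) x
      = rank (j :: (labs l ++ labs r)) x from rank_perm hfull x])]

lemma L0 {j : ℕ} (hj : j ≠ 0) : ∀ (t : LTree), (labs t).Nodup →
    (∀ x ∈ labs t, j < x) → ∀ w ∈ labs t, ∀ s, (botCut (graft w j s t)).2 ≠ j
  | leaf a, _, hx, w, hw, s => by
      simp only [labs, mem_singleton] at hw hx
      subst hw
      have haj : j < w := hx w rfl
      cases s <;> simp [graft, botCut, Nat.max_eq_left haj.le, Nat.max_eq_right haj.le] <;> omega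
  | node l r, hnd, hx, w, hw, s => by
      simp only [labs, mem_append] at hw
      have hnd' : (labs l ++ labs r).Nodup := hnd
      rcases hw with hw | hw
      · have hwr : w ∉ labs r := fun hr => (disjoint_of_nodup_append hnd') hw hr
        obtain ⟨x, y, hxy⟩ := graft_isNode (j := j) (s := s) hw
        have hG : graft w j s (node l r) = node (node x y) r := by
          simp [graft, graft_not_mem hwr, hxy]
        rw [hG, botCut_nl]
        split
        · rw [← hxy]
          exact L0 hj l (Nodup.of_append_left hnd') (fun z hz => hx z (by simp [labs, hz]))
            w hw s
        · rcases botCut_snd r with h | h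
          · simp [h, Ne.symm hj]
          · intro hc
            have := hx _ (show r.botCut.2 ∈ (node l r).labs by simp [labs, h])
            omega
      · have hwl : w ∉ labs l := fun hl => (disjoint_of_nodup_append hnd') hl hw
        obtain ⟨x, y, hxy⟩ := graft_isNode (j := j) (s := s) hw
        have hG : graft w j s (node l r) = node l (node x y) := by
          simp [graft, graft_not_mem hwl, hxy]
        rw [hG, botCut_nr]
        split
        · rcases botCut_snd l with h | h
          · simp [h, Ne.symm hj]
          · intro hc
            have := hx _ (show l.botCut.2 ∈ (node l r).labs by simp [labs, h])
            omega
        · rw [← hxy]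
          exact L0 hj r (Nodup.of_append_right hnd') (fun z hz => hx z (by simp [labs, hz]))
            w hw s

end LTree

namespace LTree
open List

lemma countP_rank_le_one {S L : List ℕ} {j a : ℕ} (hnd : (j::S).Nodup) (hL : L ⊆ S)
    (hnL : L.Nodup) (hbig : ∀ x ∈ L, j < x) (haS : a ∈ S) (haj : a < j) :
    countP (fun x => decide (rank (j :: S) x < 3)) L ≤ 1 := by
  by_contra h
  push_neg at h
  have hlen : 2 ≤ (L.filter (fun x => decide (rank (j :: S) x < 3))).length := by
    rw [← countP_eq_length_filter]; omega
  set M := L.filter (fun x => decide (rank (j :: S) x < 3)) with hM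
  have hMnd : M.Nodup := hnL.filter _
  rcases hM' : M with _ | ⟨x1, M1⟩
  · rw [hM'] at hlen; simp at hlen
  rcases hM1' : M1 with _ | ⟨x2, M2⟩
  · rw [hM', hM1'] at hlen; simp at hlen
  have hx1M : x1 ∈ M := by rw [hM']; simp
  have hx2M : x2 ∈ M := by rw [hM', hM1']; simp
  have hx12 : x1 ≠ x2 := by
    rw [hM', hM1'] at hMnd
    simp only [nodup_cons, mem_cons] at hMnd
    exact fun hc => hMnd.1 (Or.inl hc)
  have hprop : ∀ x ∈ M, x ∈ L ∧ rank (j :: S) x < 3 := by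
    intro x hx
    rw [hM] at hx
    have := mem_filter.mp hx
    simpa using this
  obtain ⟨hx1L, hx1r⟩ := hprop x1 hx1M
  obtain ⟨hx2L, hx2r⟩ := hprop x2 hx2M
  -- let u < z be the two
  have key : ∀ u z : ℕ, u ∈ L → z ∈ L → u < z → rank (j :: S) z < 3 → False := by
    intro u z huL hzL huz hzr
    have hju : j < u := hbig u huL
    have hsub : [a, j, u] <+~ (j :: S) := by
      apply List.Nodup.subperm
      · have h3 : a ≠ j ∧ a ≠ u ∧ j ≠ u := ⟨by omega, by omega, by omega⟩
        simp [h3.1, h3.2.1, h3.2.2]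
      · intro x hx
        rcases mem_cons.mp hx with rfl | hx
        · exact mem_cons_of_mem _ haS
        · rcases mem_cons.mp hx with rfl | hx
          · exact mem_cons_self
          · rcases mem_cons.mp hx with rfl | hx
            · exact mem_cons_of_mem _ (hL huL)
            · simp at hx
    have h3 := hsub.countP_le (fun y => decide (y < z))
    have heval : countP (fun y => decide (y < z)) [a, j, u] = 3 := by
      have e1 : a < z := by omega
      have e2 : j < z := by omega
      simp [countP_cons, e1, e2, huz]
    rw [heval] at h3
    rw [rank] at hzr
    omega
  rcases Nat.lt_or_ge x1 x2 with hlt | hge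
  · exact key x1 x2 hx1L hx2L hlt hx2r
  · have h4 : x2 < x1 := Nat.lt_of_le_of_ne hge (fun h => hx12 h.symm)
    exact key x2 x1 hx2L hx1L h4 hx1r

end LTree

namespace LTree
open List

lemma L1 {j : ℕ} : ∀ (t : LTree), (labs t).Nodup → j ∉ labs t →
    ∀ a, a ∈ labs t → a < j → (∀ x ∈ labs t, x ≠ a → j < x) →
    (∀ s, botCut (graft a j s t) = (t, j)) ∧
    (∀ w ∈ labs t, w ≠ a → ∀ s, (botCut (graft w j s t)).2 ≠ j)
  | leaf b, _, _, a, ha, haj, _ => by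
      simp only [labs, mem_singleton] at ha
      subst ha
      constructor
      · intro s
        cases s <;>
          simp [graft, botCut, Nat.min_eq_left haj.le, Nat.min_eq_right haj.le,
            Nat.max_eq_right haj.le, Nat.max_eq_left haj.le]
      · intro w hw hwa s
        simp only [labs, mem_singleton] at hw
        exact absurd hw hwa
  | node l r, hnd, hjm, a, ha, haj, hoth => by
      have hnd' : (labs l ++ labs r).Nodup := hnd
      have hndl : (labs l).Nodup := List.Nodup.of_append_left hnd'
      have hndr : (labs r).Nodup := List.Nodup.of_append_right hnd'
      have hjl : j ∉ labs l := fun h => hjm (by simp [labs, h])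
      have hjr : j ∉ labs r := fun h => hjm (by simp [labs, h])
      have hj0 : j ≠ 0 := by omega
      have hothl : ∀ x ∈ labs l, x ≠ a → j < x := fun x hx => hoth x (by simp [labs, hx])
      have hothr : ∀ x ∈ labs r, x ≠ a → j < x := fun x hx => hoth x (by simp [labs, hx])
      have hnd'' : (j :: (labs l ++ labs r)).Nodup := by
        rw [nodup_cons]
        exact ⟨by simp only [mem_append]; rintro (h | h); exacts [hjl h, hjr h], hnd'⟩
      simp only [labs, mem_append] at ha
      rcases ha with hal | har₀
      · -- a in the left subtree
        have har : a ∉ labs r := fun h => disjoint_of_nodup_append hnd' hal h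
        have IH := L1 l hndl hjl a hal haj hothl
        constructor
        · intro s
          have hG : graft a j s (node l r) = node (graft a j s l) r := by
            simp [graft, graft_not_mem har]
          obtain ⟨x, y, hxy⟩ := graft_isNode (j := j) (s := s) hal
          have hc_le : countP (fun y => decide (y < j)) (labs l ++ labs r) ≤ 1 := by
            have h1 : countP (fun y => decide (y < j)) (labs l ++ labs r) ≤
                countP (fun y => y == a) (labs l ++ labs r) := by
              apply countP_mono_left
              intro x hx hxj
              simp only [decide_eq_true_eq] at hxj
              simp only [beq_iff_eq]
              by_contra hne
              have := hoth x (by simpa [labs] using hx) hne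
              omega
            have h2 : count a (labs l ++ labs r) ≤ 1 := nodup_iff_count_le_one.mp hnd' a
            exact le_trans h1 h2
          have hgl : goLeft (graft a j s l) r = true := by
            rw [goLeft_graft_left r hal hndl]
            simp only [decide_eq_true_eq]
            rw [countP_cons]
            have hjr3 : rank (j :: (labs l ++ labs r)) j < 3 := by
              rw [rank_cons_self]; omega
            have ha3 : rank (j :: (labs l ++ labs r)) a < 3 := by
              have := rank_le_of_lt (S := labs l ++ labs r) haj; omega
            have hpos : 0 < countP (fun x => decide (rank (j :: (labs l ++ labs r)) x < 3))
                (labs l) := by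
              rw [countP_pos_iff]
              exact ⟨a, hal, by simpa using ha3⟩
            rw [if_pos (show (fun x => decide (rank (j :: (labs l ++ labs r)) x < 3)) j = true
              by simpa using hjr3)]
            omega
          rw [hG, hxy, botCut_nl, if_pos (hxy ▸ hgl), ← hxy, IH.1 s]
        · intro w hw hwa s
          simp only [labs, mem_append] at hw
          rcases hw with hwl | hwr
          · have hwr' : w ∉ labs r := fun h => disjoint_of_nodup_append hnd' hwl h
            have hG : graft w j s (node l r) = node (graft w j s l) r := by
              simp [graft, graft_not_mem hwr']
            obtain ⟨x, y, hxy⟩ := graft_isNode (j := j) (s := s) hwl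
            rw [hG, hxy, botCut_nl]
            split
            · exact hxy ▸ IH.2 w hwl hwa s
            · rcases botCut_snd r with h | h
              · simp only [h]; omega
              · exact fun hc => hjr (hc ▸ h)
          · have hwl' : w ∉ labs l := fun h => disjoint_of_nodup_append hnd' h hwr
            have hG : graft w j s (node l r) = node l (graft w j s r) := by
              simp [graft, graft_not_mem hwl']
            obtain ⟨x, y, hxy⟩ := graft_isNode (j := j) (s := s) hwr
            rw [hG, hxy, botCut_nr]
            split
            · rcases botCut_snd l with h | h
              · simp only [h]; omega
              · exact fun hc => hjl (hc ▸ h)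
            · refine hxy ▸ L0 hj0 r hndr (fun x hx => ?_) w hwr s
              exact hothr x hx (fun hc => har (hc ▸ hx))
      · -- a in the right subtree
        have hal' : a ∉ labs l := fun h => disjoint_of_nodup_append hnd' h har₀
        have IH := L1 r hndr hjr a har₀ haj hothr
        constructor
        · intro s
          have hG : graft a j s (node l r) = node l (graft a j s r) := by
            simp [graft, graft_not_mem hal']
          obtain ⟨x, y, hxy⟩ := graft_isNode (j := j) (s := s) har₀
          have hle : countP (fun x => decide (rank (j :: (labs l ++ labs r)) x < 3))
              (labs l) ≤ 1 := by
            refine countP_rank_le_one hnd'' (subset_append_left _ _) hndl ?_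
              (mem_append_right _ har₀) haj
            intro x hx
            exact hothl x hx (fun hc => hal' (hc ▸ hx))
          have hgl : goLeft l (graft a j s r) = false := by
            rw [goLeft_graft_right l har₀ hndr]
            simp only [decide_eq_false_iff_not]
            omega
          rw [hG, hxy]
          have hgl' : goLeft l (node x y) = false := hxy ▸ hgl
          rw [botCut_nr, if_neg (by simp [hgl']), ← hxy, IH.1 s]
        · intro w hw hwa s
          simp only [labs, mem_append] at hw
          rcases hw with hwl | hwr
          · have hwr' : w ∉ labs r := fun h => disjoint_of_nodup_append hnd' hwl h
            have hG : graft w j s (node l r) = node (graft w j s l) r := by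
              simp [graft, graft_not_mem hwr']
            obtain ⟨x, y, hxy⟩ := graft_isNode (j := j) (s := s) hwl
            rw [hG, hxy, botCut_nl]
            split
            · refine hxy ▸ L0 hj0 l hndl (fun x hx => ?_) w hwl s
              exact hothl x hx (fun hc => hal' (hc ▸ hx))
            · rcases botCut_snd r with h | h
              · simp only [h]; omega
              · exact fun hc => hjr (hc ▸ h)
          · have hwl' : w ∉ labs l := fun h => disjoint_of_nodup_append hnd' h hwr
            have hG : graft w j s (node l r) = node l (graft w j s r) := by
              simp [graft, graft_not_mem hwl']
            obtain ⟨x, y, hxy⟩ := graft_isNode (j := j) (s := s) hwr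
            rw [hG, hxy, botCut_nr]
            split
            · rcases botCut_snd l with h | h
              · simp only [h]; omega
              · exact fun hc => hjl (hc ▸ h)
            · exact hxy ▸ IH.2 w hwr hwa s

end LTree

namespace LTree
open List

/-- The conclusion of the main induction: exactly two good grafting labels. -/
def Good (j : ℕ) (t : LTree) : Prop :=
  ∃ v v', v ≠ v' ∧ v ∈ labs t ∧ v' ∈ labs t ∧
    (∀ s, botCut (graft v j s t) = (t, j)) ∧
    (∀ s, botCut (graft v' j s t) = (t, j)) ∧
    (∀ w ∈ labs t, w ≠ v → w ≠ v' → ∀ s, (botCut (graft w j s t)).2 ≠ j)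

lemma descend_left {j : ℕ} {l r : LTree} (hnd : (labs l ++ labs r).Nodup)
    (hjl : j ∉ labs l) (hj0 : j ≠ 0)
    (hgoL : ∀ w ∈ labs l, ∀ s, goLeft (graft w j s l) r = true)
    (hgoR : ∀ w ∈ labs r, ∀ s, goLeft l (graft w j s r) = true)
    (H : Good j l) : Good j (node l r) := by
  obtain ⟨v, v', hvv, hvl, hv'l, hsv, hsv', hfail⟩ := H
  have succ : ∀ u, u ∈ labs l → (∀ s, botCut (graft u j s l) = (l, j)) →
      ∀ s, botCut (graft u j s (node l r)) = (node l r, j) := by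
    intro u hul hsucc s
    have hur : u ∉ labs r := fun h => disjoint_of_nodup_append hnd hul h
    have hG : graft u j s (node l r) = node (graft u j s l) r := by
      simp [graft, graft_not_mem hur]
    obtain ⟨x, y, hxy⟩ := graft_isNode (j := j) (s := s) hul
    rw [hG, hxy, botCut_nl, if_pos (hxy ▸ hgoL u hul s), ← hxy, hsucc s]
  refine ⟨v, v', hvv, mem_append_left _ hvl, mem_append_left _ hv'l,
    succ v hvl hsv, succ v' hv'l hsv', ?_⟩
  intro w hw hw1 hw2 s
  rcases mem_append.mp hw with hwl | hwr
  · have hwr' : w ∉ labs r := fun h => disjoint_of_nodup_append hnd hwl h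
    have hG : graft w j s (node l r) = node (graft w j s l) r := by
      simp [graft, graft_not_mem hwr']
    obtain ⟨x, y, hxy⟩ := graft_isNode (j := j) (s := s) hwl
    rw [hG, hxy, botCut_nl, if_pos (hxy ▸ hgoL w hwl s)]
    exact hxy ▸ hfail w hwl hw1 hw2 s
  · have hwl' : w ∉ labs l := fun h => disjoint_of_nodup_append hnd h hwr
    have hG : graft w j s (node l r) = node l (graft w j s r) := by
      simp [graft, graft_not_mem hwl']
    obtain ⟨x, y, hxy⟩ := graft_isNode (j := j) (s := s) hwr
    rw [hG, hxy, botCut_nr, if_pos (hxy ▸ hgoR w hwr s)]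
    rcases botCut_snd l with h | h
    · simp only [h]; omega
    · exact fun hc => hjl (hc ▸ h)

lemma descend_right {j : ℕ} {l r : LTree} (hnd : (labs l ++ labs r).Nodup)
    (hjr : j ∉ labs r) (hj0 : j ≠ 0)
    (hgoL : ∀ w ∈ labs l, ∀ s, goLeft (graft w j s l) r = false)
    (hgoR : ∀ w ∈ labs r, ∀ s, goLeft l (graft w j s r) = false)
    (H : Good j r) : Good j (node l r) := by
  obtain ⟨v, v', hvv, hvr, hv'r, hsv, hsv', hfail⟩ := H
  have succ : ∀ u, u ∈ labs r → (∀ s, botCut (graft u j s r) = (r, j)) →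
      ∀ s, botCut (graft u j s (node l r)) = (node l r, j) := by
    intro u hur hsucc s
    have hul : u ∉ labs l := fun h => disjoint_of_nodup_append hnd h hur
    have hG : graft u j s (node l r) = node l (graft u j s r) := by
      simp [graft, graft_not_mem hul]
    obtain ⟨x, y, hxy⟩ := graft_isNode (j := j) (s := s) hur
    have hgl' : goLeft l (node x y) = false := hxy ▸ hgoR u hur s
    rw [hG, hxy, botCut_nr, if_neg (by simp [hgl']), ← hxy, hsucc s]
  refine ⟨v, v', hvv, mem_append_right _ hvr, mem_append_right _ hv'r,
    succ v hvr hsv, succ v' hv'r hsv', ?_⟩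
  intro w hw hw1 hw2 s
  rcases mem_append.mp hw with hwl | hwr
  · have hwr' : w ∉ labs r := fun h => disjoint_of_nodup_append hnd hwl h
    have hG : graft w j s (node l r) = node (graft w j s l) r := by
      simp [graft, graft_not_mem hwr']
    obtain ⟨x, y, hxy⟩ := graft_isNode (j := j) (s := s) hwl
    have hgl' : goLeft (node x y) r = false := hxy ▸ hgoL w hwl s
    rw [hG, hxy, botCut_nl, if_neg (by simp [hgl'])]
    rcases botCut_snd r with h | h
    · simp only [h]; omega
    · exact fun hc => hjr (hc ▸ h)
  · have hwl' : w ∉ labs l := fun h => disjoint_of_nodup_append hnd h hwr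
    have hG : graft w j s (node l r) = node l (graft w j s r) := by
      simp [graft, graft_not_mem hwl']
    obtain ⟨x, y, hxy⟩ := graft_isNode (j := j) (s := s) hwr
    have hgl' : goLeft l (node x y) = false := hxy ▸ hgoR w hwr s
    rw [hG, hxy, botCut_nr, if_neg (by simp [hgl'])]
    exact hxy ▸ hfail w hwr hw1 hw2 s

lemma countP_eq_one_extract {L : List ℕ} {p : ℕ → Bool} (h : countP p L = 1) :
    ∃ a, a ∈ L ∧ p a ∧ ∀ x ∈ L, p x → x = a := by
  have hl : (L.filter p).length = 1 := by rw [← countP_eq_length_filter]; exact h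
  obtain ⟨a, ha⟩ := length_eq_one_iff.mp hl
  have haf : a ∈ L.filter p := by rw [ha]; simp
  have h1 := mem_filter.mp haf
  refine ⟨a, h1.1, h1.2, fun x hx hpx => ?_⟩
  have : x ∈ L.filter p := mem_filter.mpr ⟨hx, hpx⟩
  rw [ha] at this; simpa using this

end LTree

namespace LTree
open List

lemma L2 {j : ℕ} : ∀ (t : LTree), (labs t).Nodup → j ∉ labs t →
    2 ≤ countP (fun y => decide (y < j)) (labs t) → Good j t
  | leaf b, _, _, hc => by
      have := countP_le_length (p := fun y => decide (y < j)) (l := labs (leaf b))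
      simp [labs] at this hc
      omega
  | node l r, hnd, hjm, hc => by
      have hnd' : (labs l ++ labs r).Nodup := hnd
      have hndl : (labs l).Nodup := List.Nodup.of_append_left hnd'
      have hndr : (labs r).Nodup := List.Nodup.of_append_right hnd'
      have hjl : j ∉ labs l := fun h => hjm (by simp [labs, h])
      have hjr : j ∉ labs r := fun h => hjm (by simp [labs, h])
      have hc' : 2 ≤ countP (fun y => decide (y < j)) (labs l ++ labs r) := hc
      have hj0 : j ≠ 0 := by
        rcases countP_pos_iff.mp (show 0 < countP (fun y => decide (y < j))
          (labs l ++ labs r) by omega) with ⟨x, _, hx⟩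
        simp only [decide_eq_true_eq] at hx
        omega
      have hnd'' : (j :: (labs l ++ labs r)).Nodup := by
        rw [nodup_cons]
        exact ⟨by simp only [mem_append]; rintro (h | h); exacts [hjl h, hjr h], hnd'⟩
      have hsplit : countP (fun y => decide (y < j)) (labs l ++ labs r) =
          countP (fun y => decide (y < j)) (labs l) +
          countP (fun y => decide (y < j)) (labs r) := countP_append
      set c := countP (fun y => decide (y < j)) (labs l ++ labs r) with hcdef
      set cl := countP (fun y => decide (y < j)) (labs l) with hcldef
      set cr := countP (fun y => decide (y < j)) (labs r) with hcrdef
      set Nl := countP (fun x => decide (rank (j :: (labs l ++ labs r)) x < 3)) (labs l)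
        with hNldef
      set Nr := countP (fun x => decide (rank (j :: (labs l ++ labs r)) x < 3)) (labs r)
        with hNrdef
      have hrankj : rank (j :: (labs l ++ labs r)) j = c := rank_cons_self _ _
      -- generic evaluations of the comparison at the root
      have hevalL : ∀ w ∈ labs l, ∀ s : Bool, goLeft (graft w j s l) r =
          decide (2 ≤ Nl + if c < 3 then 1 else 0) := by
        intro w hw s
        rw [goLeft_graft_left r hw hndl, countP_cons]
        congr 1
        rw [hNldef]
        congr 1
        simp only [hrankj]
        split <;> simp_all
      have hevalR : ∀ w ∈ labs r, ∀ s : Bool, goLeft l (graft w j s r) =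
          decide (2 ≤ Nl) := by
        intro w hw s
        rw [goLeft_graft_right l hw hndr]
      by_cases h3 : 3 ≤ c
      · -- at least three labels below j : the grafted leaf is irrelevant at the root
        have hbig : ∀ x ∈ labs l ++ labs r, j < x →
            ¬ rank (j :: (labs l ++ labs r)) x < 3 := by
          intro x _ hx
          have := rank_gt (S := labs l ++ labs r) hx
          omega
        have hNlcl : Nl ≤ cl := by
          apply countP_mono_left
          intro x hx hp
          simp only [decide_eq_true_eq] at hp ⊢
          by_contra hxj
          have hxne : x ≠ j := fun hc => hjl (hc ▸ hx)
          exact hbig x (mem_append_left _ hx) (by omega) hp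
        have hNrcr : Nr ≤ cr := by
          apply countP_mono_left
          intro x hx hp
          simp only [decide_eq_true_eq] at hp ⊢
          by_contra hxj
          have hxne : x ≠ j := fun hc => hjr (hc ▸ hx)
          exact hbig x (mem_append_right _ hx) (by omega) hp
        have hsum : 3 ≤ Nl + Nr := by
          rw [hNldef, hNrdef, ← countP_append]
          exact three_le_rank_count hnd'' h3
        have hcnlt : ¬ c < 3 := by omega
        by_cases hg : 2 ≤ Nl
        · refine descend_left hnd' hjl hj0 ?_ ?_ (L2 l hndl hjl (by omega))
          · intro w hw s
            rw [hevalL w hw s, if_neg hcnlt]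
            simp only [decide_eq_true_eq]
            omega
          · intro w hw s
            rw [hevalR w hw s]
            simp only [decide_eq_true_eq]
            omega
        · refine descend_right hnd' hjr hj0 ?_ ?_ (L2 r hndr hjr (by omega))
          · intro w hw s
            rw [hevalL w hw s, if_neg hcnlt]
            simp only [decide_eq_false_iff_not]
            omega
          · intro w hw s
            rw [hevalR w hw s]
            simp only [decide_eq_false_iff_not]
            omega
      · -- exactly two labels below j
        have hc2 : c = 2 := by omega
        have hclt : c < 3 := by omega
        have hpt : ∀ x ∈ labs l ++ labs r,
            (decide (rank (j :: (labs l ++ labs r)) x < 3) = true) ↔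
            (decide (x < j) = true) := by
          intro x hx
          simp only [decide_eq_true_eq]
          constructor
          · intro hr
            by_contra hxj
            have hxne : x ≠ j := by
              intro hc
              rcases mem_append.mp hx with h | h
              exacts [hjl (hc ▸ h), hjr (hc ▸ h)]
            have hjx : j < x := by omega
            have := rank_gt (S := labs l ++ labs r) hjx
            omega
          · intro hx'
            have := rank_le_of_lt (S := labs l ++ labs r) hx'
            omega
        have hNl : Nl = cl :=
          countP_congr (fun x hx => hpt x (mem_append_left _ hx))
        have hNr : Nr = cr :=
          countP_congr (fun x hx => hpt x (mem_append_right _ hx))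
        have hcl3 : cl = 0 ∨ cl = 1 ∨ cl = 2 := by omega
        rcases hcl3 with hcl | hcl | hcl
        · -- both small labels on the right
          refine descend_right hnd' hjr hj0 ?_ ?_ (L2 r hndr hjr (by omega))
          · intro w hw s
            rw [hevalL w hw s, if_pos hclt]
            simp only [decide_eq_false_iff_not]
            omega
          · intro w hw s
            rw [hevalR w hw s]
            simp only [decide_eq_false_iff_not]
            omega
        · -- one small label on each side
          have hcr : cr = 1 := by omega
          obtain ⟨a, hal, haj', hauniq⟩ := countP_eq_one_extract (by rw [← hcldef]; exact hcl)
          obtain ⟨b, hbr, hbj', hbuniq⟩ := countP_eq_one_extract (by rw [← hcrdef]; exact hcr)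
          simp only [decide_eq_true_eq] at haj' hbj'
          have hothl : ∀ x ∈ labs l, x ≠ a → j < x := by
            intro x hx hxa
            have hxne : x ≠ j := fun hc => hjl (hc ▸ hx)
            by_contra hle
            exact hxa (hauniq x hx (by simp; omega))
          have hothr : ∀ x ∈ labs r, x ≠ b → j < x := by
            intro x hx hxb
            have hxne : x ≠ j := fun hc => hjr (hc ▸ hx)
            by_contra hle
            exact hxb (hbuniq x hx (by simp; omega))
          obtain ⟨hsuccL, hfailL⟩ := L1 l hndl hjl a hal haj' hothl
          obtain ⟨hsuccR, hfailR⟩ := L1 r hndr hjr b hbr hbj' hothr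
          have hgoL : ∀ w ∈ labs l, ∀ s, goLeft (graft w j s l) r = true := by
            intro w hw s
            rw [hevalL w hw s, if_pos hclt]
            simp only [decide_eq_true_eq]
            omega
          have hgoR : ∀ w ∈ labs r, ∀ s, goLeft l (graft w j s r) = false := by
            intro w hw s
            rw [hevalR w hw s]
            simp only [decide_eq_false_iff_not]
            omega
          have hab : a ≠ b := fun hab =>
            disjoint_of_nodup_append hnd' hal (hab ▸ hbr)
          refine ⟨a, b, hab, mem_append_left _ hal, mem_append_right _ hbr, ?_, ?_, ?_⟩
          · intro s
            have har : a ∉ labs r := fun h => disjoint_of_nodup_append hnd' hal h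
            have hG : graft a j s (node l r) = node (graft a j s l) r := by
              simp [graft, graft_not_mem har]
            obtain ⟨x, y, hxy⟩ := graft_isNode (j := j) (s := s) hal
            rw [hG, hxy, botCut_nl, if_pos (hxy ▸ hgoL a hal s), ← hxy, hsuccL s]
          · intro s
            have hbl : b ∉ labs l := fun h => disjoint_of_nodup_append hnd' h hbr
            have hG : graft b j s (node l r) = node l (graft b j s r) := by
              simp [graft, graft_not_mem hbl]
            obtain ⟨x, y, hxy⟩ := graft_isNode (j := j) (s := s) hbr
            have hgl' : goLeft l (node x y) = false := hxy ▸ hgoR b hbr s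
            rw [hG, hxy, botCut_nr, if_neg (by simp [hgl']), ← hxy, hsuccR s]
          · intro w hw hwa hwb s
            rcases mem_append.mp hw with hwl | hwr
            · have hwr' : w ∉ labs r := fun h => disjoint_of_nodup_append hnd' hwl h
              have hG : graft w j s (node l r) = node (graft w j s l) r := by
                simp [graft, graft_not_mem hwr']
              obtain ⟨x, y, hxy⟩ := graft_isNode (j := j) (s := s) hwl
              rw [hG, hxy, botCut_nl, if_pos (hxy ▸ hgoL w hwl s)]
              exact hxy ▸ hfailL w hwl hwa s
            · have hwl' : w ∉ labs l := fun h => disjoint_of_nodup_append hnd' h hwr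
              have hG : graft w j s (node l r) = node l (graft w j s r) := by
                simp [graft, graft_not_mem hwl']
              obtain ⟨x, y, hxy⟩ := graft_isNode (j := j) (s := s) hwr
              have hgl' : goLeft l (node x y) = false := hxy ▸ hgoR w hwr s
              rw [hG, hxy, botCut_nr, if_neg (by simp [hgl'])]
              exact hxy ▸ hfailR w hwr hwb s
        · -- both small labels on the left
          refine descend_left hnd' hjl hj0 ?_ ?_ (L2 l hndl hjl (by omega))
          · intro w hw s
            rw [hevalL w hw s, if_pos hclt]
            simp only [decide_eq_true_eq]
            omega
          · intro w hw s
            rw [hevalR w hw s]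
            simp only [decide_eq_true_eq]
            omega

end LTree

namespace LTree
open List

lemma relabel_relabelUp (j : ℕ) : ∀ t, relabel j (relabelUp j t) = t
  | leaf a => by
      by_cases h : a < j
      · simp [relabelUp, relabel, h]
      · have h1 : ¬ (a + 1 < j) := by omega
        simp [relabelUp, relabel, h, h1]
  | node l r => by
      simp [relabelUp, relabel, relabel_relabelUp j l, relabel_relabelUp j r]

lemma labs_relabelUp (j : ℕ) : ∀ t,
    labs (relabelUp j t) = (labs t).map (fun a => if a < j then a else a + 1)
  | leaf a => rfl
  | node l r => by
      simp [relabelUp, labs, labs_relabelUp j l, labs_relabelUp j r]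

end LTree


/-- If `j ∈ {3,…,n+1}` is the label of the BoT leaf erased from a
labeled binary tree of size `n` producing a labeled tree `t'` of size `n − 1`,
then there are exactly `4` grafting positions in `t'` (relabeled increasingly by
`{1,…,n+1} \ {j}` via `relabelUp j`) where inserting a new leaf labeled `j`
yields a tree whose best-of-three erasure is `t'` with BoT label `j`: namely the
left and the right of each of two distinct leaves `v`, `v'`. -/
theorem four_grafting_positions (n j : ℕ) (hn : 2 ≤ n) (hj : 3 ≤ j)
    (hj' : j ≤ n + 1) (t' : LTree) (h : LTree.IsLab (n - 1) t') :
    ∃ v v' : ℕ, v ≠ v' ∧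
      {p : ℕ × Bool |
          p.1 ∈ LTree.labs (LTree.relabelUp j t') ∧
          LTree.botErase (LTree.graft p.1 j p.2 (LTree.relabelUp j t')) = t' ∧
          LTree.botLabel (LTree.graft p.1 j p.2 (LTree.relabelUp j t')) = j} =
        {(v, false), (v, true), (v', false), (v', true)} := by

  classical
  open List in
  obtain ⟨hsize, hperm⟩ := h
  rw [show n - 1 + 1 = n by omega] at hperm
  set f : ℕ → ℕ := fun a => if a < j then a else a + 1 with hf
  have hfinj : Function.Injective f := by
    intro a b hab
    simp only [hf] at hab
    split_ifs at hab <;> omega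
  have hndrange : ((List.range n).map (· + 1)).Nodup :=
    (List.nodup_range (n := n)).map (fun a b hab => by omega)
  have hndt' : (LTree.labs t').Nodup := hperm.nodup_iff.mpr hndrange
  set T := LTree.relabelUp j t' with hT
  have hlabsT : LTree.labs T = (LTree.labs t').map f := LTree.labs_relabelUp j t'
  have hndT : (LTree.labs T).Nodup := by
    rw [hlabsT]; exact hndt'.map hfinj
  have hjT : j ∉ LTree.labs T := by
    rw [hlabsT]
    intro hmem
    obtain ⟨a, _, hfa⟩ := List.mem_map.mp hmem
    simp only [hf] at hfa
    split_ifs at hfa <;> omega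
  have h1T : (1 : ℕ) ∈ LTree.labs T := by
    rw [hlabsT]
    refine List.mem_map.mpr ⟨1, ?_, by simp [hf]; omega⟩
    rw [hperm.mem_iff]
    exact List.mem_map.mpr ⟨0, List.mem_range.mpr (by omega), by simp⟩
  have h2T : (2 : ℕ) ∈ LTree.labs T := by
    rw [hlabsT]
    refine List.mem_map.mpr ⟨2, ?_, by simp [hf]; omega⟩
    rw [hperm.mem_iff]
    exact List.mem_map.mpr ⟨1, List.mem_range.mpr (by omega), by simp⟩
  have hcT : 2 ≤ countP (fun y => decide (y < j)) (LTree.labs T) := by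
    have hsub : [1, 2] <+~ LTree.labs T := by
      apply List.Nodup.subperm
      · simp
      · intro x hx
        rcases List.mem_cons.mp hx with rfl | hx
        · exact h1T
        · rcases List.mem_cons.mp hx with rfl | hx
          · exact h2T
          · simp at hx
    have := hsub.countP_le (fun y => decide (y < j))
    have heval : countP (fun y => decide (y < j)) [1, 2] = 2 := by
      have e1 : (1:ℕ) < j := by omega
      have e2 : (2:ℕ) < j := by omega
      simp [countP_cons, e1, e2]
    omega
  obtain ⟨v, v', hvv, hvT, hv'T, hsv, hsv', hfail⟩ := LTree.L2 T hndT hjT hcT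
  refine ⟨v, v', hvv, ?_⟩
  ext ⟨w, s⟩
  simp only [Set.mem_setOf_eq, Set.mem_insert_iff, Set.mem_singleton_iff, Prod.mk.injEq]
  constructor
  · rintro ⟨hmem, _, hlab⟩
    have hw : w = v ∨ w = v' := by
      by_contra hne
      push_neg at hne
      exact hfail w hmem hne.1 hne.2 s hlab
    rcases hw with rfl | rfl <;> cases s <;> tauto
  · intro hw
    have key : ∀ u : ℕ, u ∈ LTree.labs T → (∀ s', LTree.botCut (LTree.graft u j s' T) = (T, j)) →
        u ∈ LTree.labs T ∧ LTree.botErase (LTree.graft u j s T) = t' ∧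
          LTree.botLabel (LTree.graft u j s T) = j := by
      intro u humem hsucc
      refine ⟨humem, ?_, ?_⟩
      · rw [LTree.botErase, hsucc s]
        exact LTree.relabel_relabelUp j t'
      · rw [LTree.botLabel, hsucc s]
    rcases hw with ⟨rfl, rfl⟩ | ⟨rfl, rfl⟩ | ⟨rfl, rfl⟩ | ⟨rfl, rfl⟩
    · exact key w hvT hsv
    · exact key w hvT hsv
    · exact key w hv'T hsv'
    · exact key w hv'T hsv'
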